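/- Let ℏ > 0, let a ≤ b be real numbers, let g : ℝ → ℝ be continuous, and let f : ℝ → ℂ satisfy: for every t ∈ [a,b], f has derivative (i/ℏ)·g(t)·f(t) at t. If f(a) = f(b) and f(a) ≠ 0, then there exists an integer n with ∫_a^b g(t) dt = 2πnℏ. -/

import Mathlib

open MeasureTheory intervalIntegral

/-- Let `ℏ > 0`, `a ≤ b`, `g : ℝ → ℝ` continuous, and `f : ℝ → ℂ` satisfy:
for every `t ∈ [a,b]`, `f` has derivative `(i/ℏ)·g(t)·f(t)` at `t`. If `f(a) = f(b)` and
`f(a) ≠ 0`, then there exists an integer `n` with `∫_a^b g(t) dt = 2πnℏ`. -/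
theorem bohr_sommerfeld_condition (ℏ : ℝ) (hℏ : 0 < ℏ) (a b : ℝ) (hab : a ≤ b)
    (g : ℝ → ℝ) (hg : Continuous g) (f : ℝ → ℂ)
    (hf : ∀ t ∈ Set.Icc a b, HasDerivAt f (Complex.I / ℏ * g t * f t) t)
    (hfa : f a = f b) (hfa0 : f a ≠ 0) :
    ∃ n : ℤ, ∫ t in a..b, g t = 2 * Real.pi * n * ℏ := by
  set G : ℝ → ℝ := fun t => ∫ s in a..t, g s with hGdef
  have hG : ∀ t : ℝ, HasDerivAt G (g t) t := fun t =>
    (hg.integral_hasStrictDerivAt a t).hasDerivAt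
  set h : ℝ → ℂ := fun t => Complex.exp (-(Complex.I / ℏ) * G t) * f t with hhdef
  have hderiv : ∀ t ∈ Set.Icc a b, HasDerivAt h 0 t := by
    intro t ht
    have h1 : HasDerivAt (fun t => Complex.exp (-(Complex.I / ℏ) * G t))
        (Complex.exp (-(Complex.I / ℏ) * G t) * (-(Complex.I / ℏ) * g t)) t := by
      have : HasDerivAt (fun t : ℝ => -(Complex.I / ℏ) * (G t : ℂ))
          (-(Complex.I / ℏ) * g t) t := by
        exact ((hG t).ofReal_comp.const_mul _)
      simpa [mul_comm] using this.cexp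
    have := h1.mul (hf t ht)
    convert this using 1
    · rfl
    · rfl
    · ring
  have hcont : ContinuousOn h (Set.Icc a b) := fun t ht =>
    ((hderiv t ht).continuousAt).continuousWithinAt
  have hhb : h b = h a :=
    constant_of_has_deriv_right_zero hcont
      (fun x hx => ((hderiv x (Set.mem_Icc_of_Ico hx)).hasDerivWithinAt)) b
      (Set.right_mem_Icc.2 hab)
  have hGa : G a = 0 := by simp [hGdef]
  have key : Complex.exp (-(Complex.I / ℏ) * G b) = 1 := by
    have : Complex.exp (-(Complex.I / ℏ) * G b) * f b = f a := by
      simpa [hhdef, hGa] using hhb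
    rw [hfa] at this
    field_simp [hfa ▸ hfa0] at this
    rw [show -(Complex.I / ↑ℏ) * ↑(G b) = -(Complex.I * ↑(G b) / ↑ℏ) by ring]
    exact this
  rw [Complex.exp_eq_one_iff] at key
  obtain ⟨n, hn⟩ := key
  refine ⟨-n, ?_⟩
  have hI : Complex.I ≠ 0 := Complex.I_ne_zero
  have hℏ' : (ℏ : ℂ) ≠ 0 := by exact_mod_cast hℏ.ne'
  have h2 : ((-(G b) / ℏ : ℝ) : ℂ) * Complex.I = ((n * (2 * Real.pi) : ℝ) : ℂ) * Complex.I := by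
    have h' := hn
    field_simp at h'
    push_cast
    field_simp
    linear_combination h'
  have h3 : (-(G b) / ℏ : ℝ) = n * (2 * Real.pi) := by
    exact_mod_cast mul_right_cancel₀ hI h2
  show (G b : ℝ) = 2 * Real.pi * (-n : ℤ) * ℏ
  have := h3
  field_simp at this
  push_cast
  linarith
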